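/- For nonnegative integers k, n, x, the q-analog of Suranyi's formula holds: ∑_{r=0}^{min(k,n)} q^{r²} · C_q(k, r) · C_q(n, r) · C_q(x+k+n-r, k+n) = C_q(x+k, k) · C_q(x+n, n). -/

import Mathlib

open Finset

/-- The q-Pochhammer symbol `(a;q)_n = ∏_{j=0}^{n-1} (1 - a q^j)`. -/
noncomputable def qPoch (q a : RatFunc ℚ) (n : ℕ) : RatFunc ℚ :=
  ∏ j ∈ Finset.range n, (1 - a * q ^ j)

/-- The Gaussian (q-binomial) coefficient `C_q(m, k)`, defined as
`(q;q)_m / ((q;q)_k (q;q)_{m-k})` for `0 ≤ k ≤ m`, and `0` otherwise. -/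
noncomputable def qBinom (q : RatFunc ℚ) (m k : ℤ) : RatFunc ℚ :=
  if 0 ≤ k ∧ k ≤ m then
    qPoch q q m.toNat / (qPoch q q k.toNat * qPoch q q (m - k).toNat)
  else 0

namespace QSur
noncomputable abbrev q : RatFunc ℚ := RatFunc.X
noncomputable def P (n : ℕ) : RatFunc ℚ := qPoch q q n
lemma P_zero : P 0 = 1 := by simp [P, qPoch]
lemma P_succ (n : ℕ) : P (n + 1) = P n * (1 - q ^ (n + 1)) := by
  rw [P, P, qPoch, qPoch, Finset.prod_range_succ, pow_succ']
lemma one_sub_pow_ne (j : ℕ) : (1 : RatFunc ℚ) - q ^ (j + 1) ≠ 0 := by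
  have h1 : (1 : RatFunc ℚ) - RatFunc.X ^ (j+1)
      = algebraMap (Polynomial ℚ) (RatFunc ℚ) (1 - Polynomial.X ^ (j+1)) := by
    push_cast [map_sub, map_pow, RatFunc.algebraMap_X]
    ring
  rw [q, h1]
  apply RatFunc.algebraMap_ne_zero
  intro h
  have := congrArg (Polynomial.eval 0) h
  simp at this
lemma P_ne (n : ℕ) : P n ≠ 0 := by
  induction n with
  | zero => simp [P_zero]
  | succ n ih => rw [P_succ]; exact mul_ne_zero ih (one_sub_pow_ne n)
noncomputable def B (m j : ℕ) : RatFunc ℚ :=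
  if j ≤ m then P m / (P j * P (m - j)) else 0
lemma B_of_le {m j : ℕ} (h : j ≤ m) : B m j = P m / (P j * P (m - j)) := if_pos h
lemma B_of_gt {m j : ℕ} (h : m < j) : B m j = 0 := if_neg (by omega)
lemma B_self (m : ℕ) : B m m = 1 := by
  rw [B_of_le le_rfl, Nat.sub_self, P_zero, mul_one, div_self (P_ne m)]
lemma B_zero (m : ℕ) : B m 0 = 1 := by
  rw [B_of_le (Nat.zero_le m), Nat.sub_zero, P_zero, one_mul, div_self (P_ne m)]
lemma B_symm {m j : ℕ} (h : j ≤ m) : B m j = B m (m - j) := by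
  rw [B_of_le h, B_of_le (Nat.sub_le m j), Nat.sub_sub_self h, mul_comm]

lemma pascal (m j : ℕ) : B (m + 1) (j + 1) = B m j + q ^ (j + 1) * B m (j + 1) := by
  by_cases h : j + 1 ≤ m
  · obtain ⟨d, rfl⟩ : ∃ d, m = j + 1 + d := ⟨m - (j + 1), by omega⟩
    rw [B_of_le (by omega), B_of_le (by omega), B_of_le (by omega)]
    have e1 : j + 1 + d + 1 - (j + 1) = d + 1 := by omega
    have e2 : j + 1 + d - j = d + 1 := by omega
    have e3 : j + 1 + d - (j + 1) = d := by omega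
    rw [e1, e2, e3, P_succ (j + 1 + d), P_succ j, P_succ d]
    have key : (1 : RatFunc ℚ) - q ^ (j + 1 + d + 1)
        = (1 - q ^ (j + 1)) + q ^ (j + 1) * (1 - q ^ (d + 1)) := by
      have : q ^ (j + 1 + d + 1) = q ^ (j + 1) * q ^ (d + 1) := by
        rw [← pow_add]; ring_nf
      rw [this]; ring
    rw [key]
    have ha : (1 : RatFunc ℚ) - q ^ (j + 1) ≠ 0 := one_sub_pow_ne j
    have hb : (1 : RatFunc ℚ) - q ^ (d + 1) ≠ 0 := one_sub_pow_ne d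
    set a := (1 : RatFunc ℚ) - q ^ (j + 1)
    set b := (1 : RatFunc ℚ) - q ^ (d + 1)
    field_simp [P_ne j, P_ne d, P_ne (j + 1 + d), ha, hb]
  · by_cases h2 : j ≤ m
    · have : j = m := by omega
      subst this
      rw [B_self, B_self, B_of_gt (by omega), mul_zero, add_zero]
    · rw [B_of_gt (by omega), B_of_gt (by omega), B_of_gt (by omega), mul_zero, add_zero]

lemma pascal2 (m j : ℕ) : B (m + 1) (j + 1) = q ^ (m - j) * B m j + B m (j + 1) := by
  by_cases h : j + 1 ≤ m
  · obtain ⟨d, rfl⟩ : ∃ d, m = j + 1 + d := ⟨m - (j + 1), by omega⟩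
    rw [B_of_le (by omega), B_of_le (by omega), B_of_le (by omega)]
    have e1 : j + 1 + d + 1 - (j + 1) = d + 1 := by omega
    have e2 : j + 1 + d - j = d + 1 := by omega
    have e3 : j + 1 + d - (j + 1) = d := by omega
    rw [e1, e2, e3, P_succ (j + 1 + d), P_succ j, P_succ d]
    have key : (1 : RatFunc ℚ) - q ^ (j + 1 + d + 1)
        = q ^ (d + 1) * (1 - q ^ (j + 1)) + (1 - q ^ (d + 1)) := by
      have : q ^ (j + 1 + d + 1) = q ^ (j + 1) * q ^ (d + 1) := by
        rw [← pow_add]; ring_nf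
      rw [this]; ring
    rw [key]
    have ha : (1 : RatFunc ℚ) - q ^ (j + 1) ≠ 0 := one_sub_pow_ne j
    have hb : (1 : RatFunc ℚ) - q ^ (d + 1) ≠ 0 := one_sub_pow_ne d
    set a := (1 : RatFunc ℚ) - q ^ (j + 1)
    set b := (1 : RatFunc ℚ) - q ^ (d + 1)
    field_simp [P_ne j, P_ne d, P_ne (j + 1 + d), ha, hb]
  · by_cases h2 : j ≤ m
    · have : j = m := by omega
      subst this
      rw [B_self, B_self, B_of_gt (by omega)]
      simp
    · rw [B_of_gt (by omega), B_of_gt (by omega), B_of_gt (by omega), mul_zero, add_zero]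

lemma trinom (n r t : ℕ) : B n r * B (n - r) t = B n (r + t) * B (r + t) r := by
  by_cases h : r + t ≤ n
  · obtain ⟨d, rfl⟩ : ∃ d, n = r + t + d := ⟨n - (r + t), by omega⟩
    have e1 : r + t + d - r = t + d := by omega
    have e2 : r + t + d - (r + t) = d := by omega
    have e3 : r + t - r = t := by omega
    rw [B_of_le (by omega), B_of_le (by omega), B_of_le (by omega), B_of_le (by omega),
      e1, e2, e3]
    have e4 : t + d - t = d := by omega
    rw [e4]
    field_simp [P_ne r, P_ne t, P_ne d, P_ne (t + d), P_ne (r + t), P_ne (r + t + d)]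
  · rw [B_of_gt (show n < r + t by omega), zero_mul]
    by_cases h2 : r ≤ n
    · rw [B_of_gt (show n - r < t by omega), mul_zero]
    · rw [B_of_gt (show n < r by omega), zero_mul]

lemma vand (a : ℕ) : ∀ (b m : ℕ),
    B (a + b) (m + b) = ∑ t ∈ range (b + 1), q ^ (t * (t + m)) * B a (m + t) * B b t := by
  intro b
  induction b with
  | zero => intro m; simp [B_self]
  | succ b ih =>
    intro m
    have step1 : B (a + (b + 1)) (m + (b + 1))
        = B (a + b) (m + b) + q ^ ((m + b) + 1) * B (a + b) ((m + b) + 1) :=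
      pascal (a + b) (m + b)
    have step2 : B (a + b) ((m + b) + 1) = B (a + b) ((m + 1) + b) := by
      rw [show (m + b) + 1 = (m + 1) + b from by omega]
    rw [step1, step2, ih m, ih (m + 1)]
    -- now work on the RHS
    conv_rhs => rw [Finset.sum_range_succ']
    have h0 : q ^ (0 * (0 + m)) * B a (m + 0) * B (b + 1) 0 = B a m := by
      simp [B_zero]
    rw [h0]
    have hsum : ∀ i ∈ range (b + 1),
        q ^ ((i + 1) * ((i + 1) + m)) * B a (m + (i + 1)) * B (b + 1) (i + 1)
        = q ^ (m + b + 1) * (q ^ (i * (i + (m + 1))) * B a ((m + 1) + i) * B b i)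
          + q ^ ((i + 1) * ((i + 1) + m)) * B a (m + (i + 1)) * B b (i + 1) := by
      intro i hi
      have hib : i ≤ b := by simpa using Nat.lt_succ_iff.mp (Finset.mem_range.mp hi)
      rw [pascal2, mul_add]
      congr 1
      have e : (i + 1) * ((i + 1) + m) + (b - i) = (m + b + 1) + i * (i + (m + 1)) := by
        obtain ⟨c, rfl⟩ : ∃ c, b = i + c := ⟨b - i, by omega⟩
        simp [Nat.add_sub_cancel_left]
        ring
      calc q ^ ((i + 1) * ((i + 1) + m)) * B a (m + (i + 1)) * (q ^ (b - i) * B b i)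
          = q ^ ((i + 1) * ((i + 1) + m) + (b - i)) * (B a (m + (i + 1)) * B b i) := by
            rw [pow_add]; ring
        _ = q ^ ((m + b + 1) + i * (i + (m + 1))) * (B a (m + (i + 1)) * B b i) := by rw [e]
        _ = q ^ (m + b + 1) * (q ^ (i * (i + (m + 1))) * B a ((m + 1) + i) * B b i) := by
            rw [pow_add, show m + (i + 1) = (m + 1) + i from by omega]; ring
    rw [Finset.sum_congr rfl hsum, Finset.sum_add_distrib, ← Finset.mul_sum]
    -- second piece: un-peel
    have hun : ∑ i ∈ range (b + 1),
        q ^ ((i + 1) * ((i + 1) + m)) * B a (m + (i + 1)) * B b (i + 1) + B a m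
        = ∑ t ∈ range (b + 1), q ^ (t * (t + m)) * B a (m + t) * B b t := by
      have h1 : ∑ t ∈ range (b + 1 + 1), q ^ (t * (t + m)) * B a (m + t) * B b t
          = ∑ i ∈ range (b + 1), q ^ ((i + 1) * ((i + 1) + m)) * B a (m + (i + 1)) * B b (i + 1)
            + q ^ (0 * (0 + m)) * B a (m + 0) * B b 0 := Finset.sum_range_succ' _ _
      have h2 : ∑ t ∈ range (b + 1 + 1), q ^ (t * (t + m)) * B a (m + t) * B b t
          = ∑ t ∈ range (b + 1), q ^ (t * (t + m)) * B a (m + t) * B b t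
            + q ^ ((b + 1) * ((b + 1) + m)) * B a (m + (b + 1)) * B b (b + 1) :=
        Finset.sum_range_succ _ _
      rw [B_of_gt (Nat.lt_succ_self b)] at h2
      simp [B_zero] at h1 h2
      rw [← h1, h2]
    -- combine
    rw [add_assoc _ _ (B a m), hun]
    ring


lemma formb (s k : ℕ) :
    ∑ r ∈ range (s + 1), q ^ ((s - r) * (k - r)) * B k r * B s r = B (s + k) k := by
  by_cases hks : k ≤ s
  · have h1 : B (s + k) k = B (s + k) s := by
      rw [B_symm (show k ≤ s + k by omega), show s + k - k = s from by omega]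
    have h2 := vand s k (s - k)
    rw [show s - k + k = s from by omega] at h2
    rw [h1, h2]
    have hsub : ∑ r ∈ range (s + 1), q ^ ((s - r) * (k - r)) * B k r * B s r
        = ∑ r ∈ range (k + 1), q ^ ((s - r) * (k - r)) * B k r * B s r := by
      symm
      apply Finset.sum_subset (Finset.range_subset_range.mpr (by omega))
      intro r _ hr
      rw [B_of_gt (show k < r by simpa using hr), mul_zero, zero_mul]
    rw [hsub, ← Finset.sum_range_reflect
      (fun t => q ^ (t * (t + (s - k))) * B s (s - k + t) * B k t) (k + 1)]
    apply Finset.sum_congr rfl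
    intro r hr
    have hr' : r ≤ k := by simpa [Nat.lt_succ_iff] using hr
    rw [show k + 1 - 1 - r = k - r from by omega]
    have e1 : (k - r) * ((k - r) + (s - k)) = (s - r) * (k - r) := by
      obtain ⟨u, rfl⟩ : ∃ u, k = r + u := ⟨k - r, by omega⟩
      obtain ⟨v, rfl⟩ : ∃ v, s = r + u + v := ⟨s - (r + u), by omega⟩
      rw [show r + u - r = u from by omega, show r + u + v - (r + u) = v from by omega,
        show r + u + v - r = u + v from by omega]
      ring
    have e2 : (s - k) + (k - r) = s - r := by omega
    have e3 : B s (s - r) = B s r := (B_symm (show r ≤ s by omega)).symm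
    have e4 : B k (k - r) = B k r := (B_symm hr').symm
    rw [e1, e2, e3, e4]
    ring
  · have h2 := vand k s (k - s)
    rw [show k - s + s = k from by omega] at h2
    rw [show s + k = k + s from by omega, h2, ← Finset.sum_range_reflect
      (fun t => q ^ (t * (t + (k - s))) * B k (k - s + t) * B s t) (s + 1)]
    apply Finset.sum_congr rfl
    intro r hr
    have hr' : r ≤ s := by simpa [Nat.lt_succ_iff] using hr
    rw [show s + 1 - 1 - r = s - r from by omega]
    have e1 : (s - r) * ((s - r) + (k - s)) = (s - r) * (k - r) := by
      obtain ⟨u, rfl⟩ : ∃ u, s = r + u := ⟨s - r, by omega⟩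
      obtain ⟨v, rfl⟩ : ∃ v, k = r + u + v := ⟨k - (r + u), by omega⟩
      rw [show r + u - r = u from by omega, show r + u + v - (r + u) = v from by omega,
        show r + u + v - r = u + v from by omega]
      try ring
    have e2 : (k - s) + (s - r) = k - r := by omega
    have e3 : B k (k - r) = B k r := (B_symm (show r ≤ k by omega)).symm
    have e4 : B s (s - r) = B s r := (B_symm hr').symm
    rw [e1, e2, e3, e4]
    try ring


lemma swap_sum (N : ℕ) (g : ℕ → ℕ → RatFunc ℚ)
    (h1 : ∀ r s, s < r → g r s = 0) (h2 : ∀ r s, N < s → g r s = 0) :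
    ∑ r ∈ range (N + 1), ∑ t ∈ range (N + 1), g r (r + t)
      = ∑ s ∈ range (N + 1), ∑ r ∈ range (N + 1), g r s := by
  conv_rhs => rw [Finset.sum_comm]
  apply Finset.sum_congr rfl
  intro r _
  have A : ∑ t ∈ range (N + 1), g r (r + t) = ∑ s ∈ Finset.Ico r (r + (N + 1)), g r s := by
    rw [Finset.sum_Ico_eq_sum_range, show r + (N + 1) - r = N + 1 from by omega]
  rw [A]
  have B1 : ∑ s ∈ Finset.Ico r (N + 1), g r s = ∑ s ∈ Finset.Ico r (r + (N + 1)), g r s := by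
    apply Finset.sum_subset (Finset.Ico_subset_Ico le_rfl (by omega))
    intro s hs hns
    apply h2
    simp [Finset.mem_Ico] at hs hns
    omega
  have B2 : ∑ s ∈ Finset.Ico r (N + 1), g r s = ∑ s ∈ range (N + 1), g r s := by
    apply Finset.sum_subset
    · rw [Finset.range_eq_Ico]
      exact Finset.Ico_subset_Ico (by omega) le_rfl
    · intro s hs hns
      apply h1
      simp [Finset.mem_Ico] at hs hns
      omega
  rw [← B1, B2]

lemma main (k n x : ℕ) :
    ∑ r ∈ range (n + 1), q ^ (r * r) * B k r * B n r * B (x + k + (n - r)) (k + n)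
      = B (x + k) k * B (x + n) n := by
  have h1 : ∀ r s : ℕ, s < r →
      q ^ (r * r + (s - r) * ((s - r) + (k + r))) * B k r * (B n s * B s r)
        * B (x + k) (k + s) = 0 := by
    intro r s h
    rw [B_of_gt h]
    ring
  have h2 : ∀ r s : ℕ, n < s →
      q ^ (r * r + (s - r) * ((s - r) + (k + r))) * B k r * (B n s * B s r)
        * B (x + k) (k + s) = 0 := by
    intro r s h
    rw [B_of_gt h]
    ring
  have hswap := swap_sum n
    (fun r s => q ^ (r * r + (s - r) * ((s - r) + (k + r))) * B k r * (B n s * B s r)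
      * B (x + k) (k + s)) h1 h2
  calc ∑ r ∈ range (n + 1), q ^ (r * r) * B k r * B n r * B (x + k + (n - r)) (k + n)
      = ∑ r ∈ range (n + 1), ∑ t ∈ range (n + 1),
          q ^ (r * r + ((r + t) - r) * (((r + t) - r) + (k + r))) * B k r
            * (B n (r + t) * B (r + t) r) * B (x + k) (k + (r + t)) := by
        apply Finset.sum_congr rfl
        intro r hr
        have hrn : r ≤ n := by simpa [Nat.lt_succ_iff] using hr
        have hv := vand (x + k) (n - r) (k + r)
        rw [show k + r + (n - r) = k + n from by omega] at hv
        rw [hv, Finset.mul_sum]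
        rw [Finset.sum_subset (Finset.range_subset_range.mpr (show n - r + 1 ≤ n + 1 from by omega))]
        · apply Finset.sum_congr rfl
          intro t _
          rw [show r + t - r = t from by omega, ← trinom n r t,
            show k + (r + t) = k + r + t from by omega, pow_add]
          ring
        · intro t ht hnt
          have : n - r < t := by
            simp [Finset.mem_range] at ht hnt
            omega
          rw [B_of_gt this]
          ring
    _ = ∑ s ∈ range (n + 1), ∑ r ∈ range (n + 1),
          q ^ (r * r + (s - r) * ((s - r) + (k + r))) * B k r * (B n s * B s r)
            * B (x + k) (k + s) := hswap
    _ = ∑ s ∈ range (n + 1), q ^ (s * s) * (B (x + k) (k + s) * B (k + s) k) * B n s := by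
        apply Finset.sum_congr rfl
        intro s hs
        have hsn : s ≤ n := by simpa [Nat.lt_succ_iff] using hs
        have hshrink : ∑ r ∈ range (s + 1),
            q ^ (r * r + (s - r) * ((s - r) + (k + r))) * B k r * (B n s * B s r)
              * B (x + k) (k + s)
            = ∑ r ∈ range (n + 1),
            q ^ (r * r + (s - r) * ((s - r) + (k + r))) * B k r * (B n s * B s r)
              * B (x + k) (k + s) := by
          apply Finset.sum_subset (Finset.range_subset_range.mpr (by omega))
          intro r hr hnr
          have : s < r := by
            simp [Finset.mem_range] at hr hnr
            omega
          rw [B_of_gt this]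
          ring
        rw [← hshrink]
        have hterm : ∀ r ∈ range (s + 1),
            q ^ (r * r + (s - r) * ((s - r) + (k + r))) * B k r * (B n s * B s r)
              * B (x + k) (k + s)
            = (B n s * B (x + k) (k + s) * q ^ (s * s))
              * (q ^ ((s - r) * (k - r)) * B k r * B s r) := by
          intro r hr
          have hrs : r ≤ s := by simpa [Nat.lt_succ_iff] using hr
          by_cases hk : r ≤ k
          · have e : r * r + (s - r) * ((s - r) + (k + r)) = s * s + (s - r) * (k - r) := by
              obtain ⟨u, rfl⟩ : ∃ u, s = r + u := ⟨s - r, by omega⟩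
              obtain ⟨v, rfl⟩ : ∃ v, k = r + v := ⟨k - r, by omega⟩
              rw [show r + u - r = u from by omega, show r + v - r = v from by omega]
              ring
            rw [e, pow_add]
            ring
          · rw [B_of_gt (show k < r by omega)]
            ring
        rw [Finset.sum_congr rfl hterm, ← Finset.mul_sum, formb,
          show s + k = k + s from by omega]
        ring
    _ = ∑ s ∈ range (n + 1), (B (x + k) k) * (q ^ (s * s) * B x s * B n s) := by
        apply Finset.sum_congr rfl
        intro s _
        have ht := trinom (x + k) k s
        rw [show x + k - k = x from by omega] at ht
        rw [← ht]
        ring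
    _ = B (x + k) k * B (x + n) n := by
        rw [← Finset.mul_sum]
        congr 1
        have hv := vand x n 0
        simp only [Nat.zero_add, Nat.add_zero, zero_add, add_zero] at hv
        rw [hv]


lemma qBinom_natCast (m j : ℕ) : qBinom RatFunc.X (m : ℤ) (j : ℤ) = B m j := by
  by_cases h : j ≤ m
  · rw [qBinom, if_pos ⟨Int.natCast_nonneg j, by exact_mod_cast h⟩, B_of_le h]
    rw [show ((m : ℤ)).toNat = m from by omega, show ((j : ℤ)).toNat = j from by omega,
      show (((m : ℤ)) - ((j : ℤ))).toNat = m - j from by omega]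
    rfl
  · rw [qBinom, if_neg (by omega), B_of_gt (by omega)]

end QSur

theorem q_suranyi (k n x : ℕ) :
    ∑ r ∈ Finset.range (min k n + 1),
      (RatFunc.X : RatFunc ℚ) ^ (r ^ 2) *
        qBinom RatFunc.X (k : ℤ) (r : ℤ) * qBinom RatFunc.X (n : ℤ) (r : ℤ) *
        qBinom RatFunc.X ((x : ℤ) + k + n - r) ((k : ℤ) + n)
    = qBinom RatFunc.X ((x : ℤ) + k) (k : ℤ) * qBinom RatFunc.X ((x : ℤ) + n) (n : ℤ) := by
  have step : ∀ r ∈ range (min k n + 1),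
      (RatFunc.X : RatFunc ℚ) ^ (r ^ 2) *
        qBinom RatFunc.X (k : ℤ) (r : ℤ) * qBinom RatFunc.X (n : ℤ) (r : ℤ) *
        qBinom RatFunc.X ((x : ℤ) + k + n - r) ((k : ℤ) + n)
      = QSur.q ^ (r * r) * QSur.B k r * QSur.B n r * QSur.B (x + k + (n - r)) (k + n) := by
    intro r hr
    have hrn : r ≤ n := by
      simp [Finset.mem_range] at hr
      omega
    have e1 : ((x : ℤ) + k + n - r) = ((x + k + (n - r) : ℕ) : ℤ) := by push_cast [hrn]; omega
    have e2 : ((k : ℤ) + n) = ((k + n : ℕ) : ℤ) := by push_cast; ring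
    rw [e1, e2, QSur.qBinom_natCast, QSur.qBinom_natCast, QSur.qBinom_natCast, pow_two r]
  rw [Finset.sum_congr rfl step]
  have hext : ∑ r ∈ range (min k n + 1),
      QSur.q ^ (r * r) * QSur.B k r * QSur.B n r * QSur.B (x + k + (n - r)) (k + n)
      = ∑ r ∈ range (n + 1),
      QSur.q ^ (r * r) * QSur.B k r * QSur.B n r * QSur.B (x + k + (n - r)) (k + n) := by
    apply Finset.sum_subset (Finset.range_subset_range.mpr (by omega))
    intro r hr hnr
    have : k < r := by
      simp [Finset.mem_range] at hr hnr
      omega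
    rw [QSur.B_of_gt this]
    ring
  rw [hext, QSur.main]
  rw [show ((x : ℤ) + k) = ((x + k : ℕ) : ℤ) from by push_cast; ring,
    show ((x : ℤ) + n) = ((x + n : ℕ) : ℤ) from by push_cast; ring,
    QSur.qBinom_natCast, QSur.qBinom_natCast]
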